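/- For any nonadditive measure μ, measurable f : X → [0,∞), and scalar α ≥ 0, the Sugeno integral satisfies Su(μ, α·f) ≤ max(1, α) · Su(μ, f) (truncated subhomogeneity). -/

import Mathlib

open scoped NNReal ENNReal
open ENNReal Filter Topology

variable {X : Type*} [MeasurableSpace X]

/-- The Sugeno integral of `g` w.r.t. a nonadditive measure `μ`:
`Su(μ,g) := sup_{t ∈ [0,∞)} min(t, μ({g > t}))`. -/
noncomputable def Su (μ : Set X → ℝ≥0∞) (g : X → ℝ≥0∞) : ℝ≥0∞ :=
  ⨆ t : ℝ≥0, min (t : ℝ≥0∞) (μ {x | (t : ℝ≥0∞) < g x})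

/-- Truncated subhomogeneity of the Sugeno integral: `Su(μ, α·f) ≤ max(1, α) · Su(μ, f)`. -/
theorem sugeno_truncated_subhomogeneous
    (μ : Set X → ℝ≥0∞) (h0 : μ ∅ = 0)
    (hmono : ∀ ⦃A B : Set X⦄, MeasurableSet A → MeasurableSet B → A ⊆ B → μ A ≤ μ B)
    (f : X → ℝ≥0) (hf : Measurable f) (α : ℝ≥0) :
    Su μ (fun x => ((α : ℝ≥0∞) * (f x : ℝ≥0∞))) ≤
      max 1 (α : ℝ≥0∞) * Su μ (fun x => (f x : ℝ≥0∞)) := by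
  rcases eq_or_ne α 0 with rfl | hα
  · simp only [ENNReal.coe_zero, zero_mul]
    have : Su μ (fun _ : X => (0 : ℝ≥0∞)) = 0 := by simp [Su, h0]
    simp [this]
  · refine iSup_le fun t => ?_
    set s : ℝ≥0 := t / α with hs
    have hts : (t : ℝ≥0∞) = (α : ℝ≥0∞) * (s : ℝ≥0∞) := by
      rw [← ENNReal.coe_mul, hs, mul_div_cancel₀ _ hα]
    have hset : {x | (t : ℝ≥0∞) < (α : ℝ≥0∞) * (f x : ℝ≥0∞)}
        = {x | (s : ℝ≥0∞) < (f x : ℝ≥0∞)} := by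
      ext x
      simp only [Set.mem_setOf_eq, hts]
      exact ENNReal.mul_lt_mul_iff_right (by exact_mod_cast hα) ENNReal.coe_ne_top
    rw [hset, hts]
    set m := μ {x | (s : ℝ≥0∞) < (f x : ℝ≥0∞)} with hm
    have key : min ((α : ℝ≥0∞) * (s : ℝ≥0∞)) m
        ≤ max 1 (α : ℝ≥0∞) * min (s : ℝ≥0∞) m := by
      rcases le_total ((s : ℝ≥0∞)) m with h | h
      · rw [min_eq_left h]
        calc min ((α : ℝ≥0∞) * (s : ℝ≥0∞)) m ≤ (α : ℝ≥0∞) * (s : ℝ≥0∞) :=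
              min_le_left _ _
          _ ≤ max 1 (α : ℝ≥0∞) * (s : ℝ≥0∞) :=
              mul_le_mul_left (le_max_right _ _) _
      · rw [min_eq_right h]
        calc min ((α : ℝ≥0∞) * (s : ℝ≥0∞)) m ≤ m := min_le_right _ _
          _ ≤ max 1 (α : ℝ≥0∞) * m := le_mul_of_one_le_left' (le_max_left _ _)
    refine key.trans (mul_le_mul_right ?_ _)
    exact le_iSup (fun u : ℝ≥0 => min (u : ℝ≥0∞) (μ {x | (u : ℝ≥0∞) < (f x : ℝ≥0∞)})) s
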